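/- Let d ≥ 2 and n ≥ 1 be integers. For a positive integer k, set x(k) = ⌊log_d k⌋ and h̄(k) = d^{⌊(x(k)+n+1)/2⌋} + k·( d^{n−⌊(x(k)+n+1)/2⌋} − 1 ). Then for every integer k ≥ 2 with ⌊log_d k⌋ ≤ n, one has h̄(k−1) ≤ h̄(k); in other words, h̄ is non-decreasing on the range of k with ⌊log_d k⌋ ≤ n. -/

import Mathlib

/-- The second technical lemma of the paper: with `x(k) = ⌊log_d k⌋`, the
function `h̄(k) = d^{⌊(x(k)+n+1)/2⌋} + k (d^{n-⌊(x(k)+n+1)/2⌋} - 1)` satisfies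
`h̄(k-1) ≤ h̄(k)` for every `k ≥ 2` with `⌊log_d k⌋ ≤ n`. -/
theorem stmt_8 (d n : ℕ) (hd : 2 ≤ d) (hn : 1 ≤ n) (k : ℕ) (hk : 2 ≤ k)
    (hlog : Nat.log d k ≤ n) :
    d ^ ((Nat.log d (k - 1) + n + 1) / 2)
        + (k - 1) * (d ^ (n - (Nat.log d (k - 1) + n + 1) / 2) - 1)
      ≤ d ^ ((Nat.log d k + n + 1) / 2)
        + k * (d ^ (n - (Nat.log d k + n + 1) / 2) - 1) := by
  set x := Nat.log d k with hx
  have hd1 : 1 < d := by omega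
  have hmono : Nat.log d (k - 1) ≤ x := Nat.log_mono_right (by omega)
  rcases eq_or_lt_of_le hmono with heq | hlt
  · rw [heq]
    have h1 : (k - 1) * (d ^ (n - (x + n + 1) / 2) - 1)
        ≤ k * (d ^ (n - (x + n + 1) / 2) - 1) :=
      Nat.mul_le_mul_right _ (by omega)
    omega
  · -- here k = d^x and log d (k-1) = x - 1
    have hx1 : 1 ≤ x := by omega
    have hub : k - 1 < d ^ x := by
      have := (Nat.log_lt_iff_lt_pow hd1 (show k - 1 ≠ 0 by omega)).1 hlt
      exact this
    have hlb : d ^ x ≤ k := Nat.pow_log_le_self d (by omega)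
    have hkeq : k = d ^ x := by omega
    have hpow2 : 2 * d ^ (x - 1) ≤ d ^ x := by
      calc 2 * d ^ (x - 1) ≤ d * d ^ (x - 1) := Nat.mul_le_mul_right _ hd
        _ = d ^ x := by rw [← pow_succ']; congr 1; omega
    have hpowpos : 0 < d ^ (x - 1) := Nat.pow_pos (by omega)
    have hlogm : Nat.log d (k - 1) = x - 1 := by
      apply Nat.log_eq_of_pow_le_of_lt_pow
      · omega
      · have : x - 1 + 1 = x := by omega
        rw [this]; omega
    rw [hlogm]
    have hxn : x ≤ n := hlog
    rcases Nat.even_or_odd (x + n) with he | ho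
    · -- even case: both exponents equal (x+n)/2
      obtain ⟨m, hm⟩ := he
      have i1 : (x - 1 + n + 1) / 2 = m := by omega
      have i2 : (x + n + 1) / 2 = m := by omega
      rw [i1, i2]
      have h1 : (k - 1) * (d ^ (n - m) - 1) ≤ k * (d ^ (n - m) - 1) :=
        Nat.mul_le_mul_right _ (by omega)
      omega
    · -- odd case
      obtain ⟨m, hm⟩ := ho
      have hxltn : x < n := by
        rcases Nat.lt_or_ge x n with h | h
        · exact h
        · exfalso; omega
      have hm1n : m + 1 ≤ n := by omega
      have i1 : (x - 1 + n + 1) / 2 = m := by omega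
      have i2 : (x + n + 1) / 2 = m + 1 := by omega
      rw [i1, i2]
      set A := d ^ m with hA
      set B := d ^ (n - (m + 1)) with hB
      set C := d ^ (n - m) with hC
      set p := d ^ x with hp
      have hBC : C = d * B := by
        rw [hB, hC, ← pow_succ']; congr 1; omega
      have e1 : p * B = A := by
        rw [hp, hB, hA, ← pow_add]; congr 1; omega
      have e2 : p * C = d * A := by
        rw [hp, hC, hA, ← pow_add, ← pow_succ']; congr 1; omega
      have hB1 : 1 ≤ B := Nat.one_le_pow _ _ (by omega)
      have hC1 : 1 ≤ C := Nat.one_le_pow _ _ (by omega)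
      have hp1 : 1 ≤ p := Nat.one_le_pow _ _ (by omega)
      have hA1 : 1 ≤ A := Nat.one_le_pow _ _ (by omega)
      have hdm : d ^ (m + 1) = d * A := by rw [hA, pow_succ']
      rw [hdm]
      zify [hB1, hC1, hp1]
      push_cast at e1 e2 hBC
      nlinarith [e1, e2, hBC, hB1, hd]
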